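/- arXiv:1611.05269 — 2 statements merged into one kernel-verified Lean document; each statement's English description precedes it below -/
import Mathlib

section
/- Let J_h be a diagonal N×N matrix with diagonal entries J_h(i) ∈ {-j, 0, +j}, where J_h(i) = -j for i in Γ₂, 0 for i in Γ₁∪Γ₃, and +j for i in Γ₄. If x ∈ ℝ^N has GFT x̂ = V^{-1}x satisfying the conjugate-symmetry x̂(i') = x̂(i)* and v_{i'} = v_i* for paired indices i ∈ Γ₂, i' ∈ Γ₄, then the graph Hilbert transform x_h = V J_h V^{-1} x is real-valued. -/
open Matrix Complex

/-- The graph Hilbert transform x_h = V J_h V⁻¹ x of a real signal with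
conjugate-symmetric GFT is real-valued. -/
theorem graph_hilbert_transform_real
    (N : ℕ) (V W : Matrix (Fin N) (Fin N) ℂ)
    (hVW : V * W = 1) (hWV : W * V = 1)
    (G1 G2 G3 G4 : Finset (Fin N))
    (hpartition : ∀ i, (i ∈ G1 ∧ i ∉ G2 ∧ i ∉ G3 ∧ i ∉ G4) ∨
      (i ∉ G1 ∧ i ∈ G2 ∧ i ∉ G3 ∧ i ∉ G4) ∨
      (i ∉ G1 ∧ i ∉ G2 ∧ i ∈ G3 ∧ i ∉ G4) ∨
      (i ∉ G1 ∧ i ∉ G2 ∧ i ∉ G3 ∧ i ∈ G4))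
    (d : Fin N → ℂ)
    (hd2 : ∀ i ∈ G2, d i = -Complex.I)
    (hd13 : ∀ i ∈ G1 ∪ G3, d i = 0)
    (hd4 : ∀ i ∈ G4, d i = Complex.I)
    (σ : Fin N → Fin N) (hσ : Function.Involutive σ)
    (hσ24 : ∀ i ∈ G2, σ i ∈ G4) (hσ42 : ∀ i ∈ G4, σ i ∈ G2)
    (hpair : ∀ i ∈ G2, (fun k => V k (σ i)) = (fun k => (starRingEnd ℂ) (V k i)))
    (x : Fin N → ℝ)
    (xhat : Fin N → ℂ) (hxhat : xhat = W.mulVec (fun i => (x i : ℂ)))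
    (hconj : ∀ i ∈ G2, xhat (σ i) = (starRingEnd ℂ) (xhat i))
    (xh : Fin N → ℂ)
    (hxh : xh = (V * Matrix.diagonal d * W).mulVec (fun i => (x i : ℂ))) :
    ∀ k, (xh k).im = 0 := by
  intro k
  have hx : xh k = ∑ i, V k i * d i * xhat i := by
    rw [hxh, hxhat, ← Matrix.mulVec_mulVec]
    simp [Matrix.mulVec, dotProduct, Matrix.mul_diagonal]
  set f : Fin N → ℝ := fun i => (V k i * d i * xhat i).im with hf
  have him : (xh k).im = ∑ i, f i := by
    rw [hx, Complex.im_sum]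
  rw [him]
  -- terms outside G2 ∪ G4 vanish
  have hzero : ∀ i ∈ Finset.univ, i ∉ G2 ∪ G4 → f i = 0 := by
    intro i _ hi
    rcases hpartition i with ⟨h1,_,_,_⟩|⟨_,h2,_,_⟩|⟨_,_,h3,_⟩|⟨_,_,_,h4⟩
    · simp [hf, hd13 i (Finset.mem_union_left _ h1)]
    · exact absurd (Finset.mem_union_left _ h2) hi
    · simp [hf, hd13 i (Finset.mem_union_right _ h3)]
    · exact absurd (Finset.mem_union_right _ h4) hi
  rw [← Finset.sum_subset (Finset.subset_univ (G2 ∪ G4)) hzero]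
  have hdisj : Disjoint G2 G4 := by
    rw [Finset.disjoint_left]
    intro i h2 h4
    rcases hpartition i with ⟨_,h,_,_⟩|⟨_,_,_,h⟩|⟨_,h,_,_⟩|⟨_,h,_,_⟩ <;> tauto
  rw [Finset.sum_union hdisj]
  have hG4 : ∑ i ∈ G4, f i = ∑ i ∈ G2, f (σ i) := by
    refine (Finset.sum_nbij' σ σ ?_ ?_ ?_ ?_ ?_).symm
    · intro i hi; exact hσ24 i hi
    · intro i hi; exact hσ42 i hi
    · intro i _; exact hσ i
    · intro i _; exact hσ i
    · intro i _; rfl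
  rw [hG4]
  have key : ∀ i ∈ G2, f (σ i) = - f i := by
    intro i hi
    have hV : V k (σ i) = (starRingEnd ℂ) (V k i) := congrFun (hpair i hi) k
    have hxc : xhat (σ i) = (starRingEnd ℂ) (xhat i) := hconj i hi
    have : V k (σ i) * d (σ i) * xhat (σ i)
        = (starRingEnd ℂ) (V k i * d i * xhat i) := by
      rw [hV, hxc, hd4 _ (hσ24 i hi), hd2 i hi]
      simp [mul_comm, mul_left_comm, mul_assoc]
    simp only [hf]
    rw [this, Complex.conj_im]
  rw [Finset.sum_congr rfl key, Finset.sum_neg_distrib]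
  ring
end

section
/- Generalized quadrature phase-shifting: for i ∈ Γ₂ with v_{i'} = v_i* for the paired i' ∈ Γ₄, the graph Hilbert transform satisfies H(Re(v_i)) = Im(v_i) and H(Im(v_i)) = -Re(v_i). -/
open Matrix Complex

lemma col_eig {N : ℕ} (V W : Matrix (Fin N) (Fin N) ℂ)
    (hWV : W * V = 1) (d : Fin N → ℂ)
    (H : Matrix (Fin N) (Fin N) ℂ) (hH : H = V * Matrix.diagonal d * W)
    (j : Fin N) :
    H.mulVec (fun k => V k j) = fun k => d j * V k j := by
  have hv : (fun k => V k j) = V.mulVec (Pi.single j 1) := by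
    funext k
    simp [Matrix.mulVec_single]
  rw [hv, hH, Matrix.mulVec_mulVec, Matrix.mul_assoc (V * Matrix.diagonal d),
    hWV, Matrix.mul_one]
  funext k
  simp [Matrix.mulVec_single, Matrix.mul_apply, Matrix.diagonal, Finset.sum_ite_eq,
    mul_comm]

/-- Generalized quadrature phase-shifting: H(Re v_i) = Im v_i and
H(Im v_i) = -Re v_i for conjugate-paired eigenvectors. -/
theorem graph_hilbert_phase_shift
    (N : ℕ) (V W : Matrix (Fin N) (Fin N) ℂ)
    (hVW : V * W = 1) (hWV : W * V = 1)
    (G1 G2 G3 G4 : Finset (Fin N))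
    (d : Fin N → ℂ)
    (hd2 : ∀ i ∈ G2, d i = -Complex.I)
    (hd13 : ∀ i ∈ G1 ∪ G3, d i = 0)
    (hd4 : ∀ i ∈ G4, d i = Complex.I)
    (H : Matrix (Fin N) (Fin N) ℂ) (hH : H = V * Matrix.diagonal d * W)
    (i i' : Fin N) (hi : i ∈ G2) (hi' : i' ∈ G4)
    (hpair : (fun k => V k i') = (fun k => (starRingEnd ℂ) (V k i))) :
    H.mulVec (fun k => ((V k i).re : ℂ)) = (fun k => ((V k i).im : ℂ)) ∧
    H.mulVec (fun k => ((V k i).im : ℂ)) = (fun k => -((V k i).re : ℂ)) := by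
  have h1 := col_eig V W hWV d H hH i
  have h2 := col_eig V W hWV d H hH i'
  have hdi : d i = -Complex.I := hd2 i hi
  have hdi' : d i' = Complex.I := hd4 i' hi'
  have hc : ∀ k, V k i' = (starRingEnd ℂ) (V k i) := fun k => congrFun hpair k
  have hadd : ∀ k, V k i + (starRingEnd ℂ) (V k i) = 2 * ((V k i).re : ℂ) := by
    intro k; rw [Complex.add_conj]; push_cast; ring
  have hsub : ∀ k, V k i - (starRingEnd ℂ) (V k i) = 2 * ((V k i).im : ℂ) * Complex.I := by
    intro k; rw [Complex.sub_conj]; push_cast; ring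
  have hRe : (fun k => ((V k i).re : ℂ)) =
      (2:ℂ)⁻¹ • (fun k => V k i) + (2:ℂ)⁻¹ • (fun k => V k i') := by
    funext k
    simp only [Pi.add_apply, Pi.smul_apply, smul_eq_mul, hc k]
    linear_combination (-(2:ℂ)⁻¹) * hadd k
  have hIm : (fun k => ((V k i).im : ℂ)) =
      (-(2:ℂ)⁻¹ * Complex.I) • (fun k => V k i) +
      ((2:ℂ)⁻¹ * Complex.I) • (fun k => V k i') := by
    funext k
    simp only [Pi.add_apply, Pi.smul_apply, smul_eq_mul, hc k]
    linear_combination (Complex.I / 2) * hsub k +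
      ((V k i).im : ℂ) * Complex.I_sq
  constructor
  · rw [hRe, Matrix.mulVec_add, Matrix.mulVec_smul, Matrix.mulVec_smul, h1, h2]
    funext k
    simp only [Pi.add_apply, Pi.smul_apply, smul_eq_mul, hdi, hdi', hc k]
    linear_combination (-Complex.I / 2) * hsub k +
      (-((V k i).im : ℂ)) * Complex.I_sq
  · rw [hIm, Matrix.mulVec_add, Matrix.mulVec_smul, Matrix.mulVec_smul, h1, h2]
    funext k
    simp only [Pi.add_apply, Pi.smul_apply, smul_eq_mul, hdi, hdi', hc k]
    linear_combination (-(2:ℂ)⁻¹) * hadd k +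
      ((V k i + (starRingEnd ℂ) (V k i)) / 2) * Complex.I_sq
end
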